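/- arXiv:0803.0890 — 2 statements merged into one kernel-verified Lean document; each statement's English description precedes it below -/
import Mathlib

section
/- Assume P is the identity matrix and X_{i,j} = 0 whenever dist(i,j) > R. For all i, j ∈ L and all t ∈ ℝ one has √‖X‖ · |C^{xx}_{i,j}(t)| ≤ τ^{2⌈d_{i,j}⌉+1} · cosh(τ)/(2⌈d_{i,j}⌉+1)!. -/
/-- The ℓ²→ℓ² operator norm of a real matrix. -/
noncomputable def l2OpNorm {V : Type*} [Fintype V] [DecidableEq V] (M : Matrix V V ℝ) : ℝ :=
  ‖Matrix.toEuclideanCLM (𝕜 := ℝ) M‖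

/-- For `P = 𝟙`: `C^{xx}_{i,j}(t) = ∑_{n≥0} (−1)^n t^{2n+1} (X^n)_{i,j}/(2n+1)!`,
which equals `i[x̂_i(t), x̂_j]`. -/
noncomputable def Cxx {V : Type*} [Fintype V] [DecidableEq V]
    (X : Matrix V V ℝ) (i j : V) (t : ℝ) : ℝ :=
  ∑' n : ℕ, (-1 : ℝ) ^ n * t ^ (2 * n + 1) * ((X ^ n) i j) / (Nat.factorial (2 * n + 1))

lemma entry_le_l2OpNorm {V : Type*} [Fintype V] [DecidableEq V] (M : Matrix V V ℝ) (i j : V) :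
    |M i j| ≤ l2OpNorm M := by
  have h1 : M i j = inner (𝕜 := ℝ) (EuclideanSpace.single i (1:ℝ))
      (Matrix.toEuclideanCLM (𝕜 := ℝ) M (EuclideanSpace.single j (1:ℝ))) := by
    rw [EuclideanSpace.inner_single_left]
    have h2 := congrFun (Matrix.ofLp_toEuclideanCLM (𝕜 := ℝ) M
      (EuclideanSpace.single j (1:ℝ))) i
    rw [map_one, one_mul, h2]
    simp [Matrix.toLin'_apply, Matrix.mulVec, dotProduct,
      EuclideanSpace.single_apply, Pi.single_apply, mul_comm]
  have h4 : ‖Matrix.toEuclideanCLM (𝕜 := ℝ) M (EuclideanSpace.single j (1:ℝ))‖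
      ≤ l2OpNorm M * ‖EuclideanSpace.single j (1:ℝ)‖ :=
    ContinuousLinearMap.le_opNorm _ _
  have h5 : ‖EuclideanSpace.single i (1:ℝ)‖ = 1 := by
    rw [EuclideanSpace.norm_single]; simp
  have h6 : ‖EuclideanSpace.single j (1:ℝ)‖ = 1 := by
    rw [EuclideanSpace.norm_single]; simp
  rw [h1]
  refine (abs_real_inner_le_norm _ _).trans ?_
  rw [h5, one_mul]
  exact h4.trans (by rw [h6, mul_one])

lemma pow_loc_zero {V : Type*} [Fintype V] [DecidableEq V]
    (G : SimpleGraph V) (hconn : G.Connected) (R : ℕ)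
    (X : Matrix V V ℝ) (hXloc : ∀ i j : V, R < G.dist i j → X i j = 0) :
    ∀ n : ℕ, ∀ i j : V, n * R < G.dist i j → (X ^ n) i j = 0 := by
  intro n
  induction n with
  | zero =>
    intro i j h
    simp only [zero_mul] at h
    have hij : i ≠ j := by
      rintro rfl; simp [SimpleGraph.dist_self] at h
    simp [Matrix.one_apply_ne hij]
  | succ n ih =>
    intro i j h
    rw [pow_succ', Matrix.mul_apply]
    apply Finset.sum_eq_zero
    intro k _
    by_cases hk : R < G.dist i k
    · rw [hXloc i k hk, zero_mul]
    · push_neg at hk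
      have htri := hconn.dist_triangle (u := i) (v := k) (w := j)
      have : n * R < G.dist k j := by
        have : (n + 1) * R < G.dist i k + G.dist k j := lt_of_lt_of_le h htri
        nlinarith [Nat.succ_mul n R]
      rw [ih k j this, mul_zero]

/-- **Lieb-Robinson bound for local couplings and `P = 𝟙`**, `xx` commutator:
`√‖X‖ · |C^{xx}_{i,j}(t)| ≤ τ^{2⌈d⌉+1} · cosh τ / (2⌈d⌉+1)!` with `d = dist(i,j)/R`
and `τ = √‖X‖·|t|`. -/
theorem lieb_robinson_local_P_one_xx {V : Type*} [Fintype V] [DecidableEq V]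
    (G : SimpleGraph V) (hconn : G.Connected) (R : ℕ) (hR : 1 ≤ R)
    (X : Matrix V V ℝ) (hX : X.IsSymm)
    (hXloc : ∀ i j : V, R < G.dist i j → X i j = 0)
    (i j : V) (t : ℝ) :
    let τ : ℝ := Real.sqrt (l2OpNorm X) * |t|
    let c : ℕ := (⌈(G.dist i j : ℝ) / R⌉).toNat
    Real.sqrt (l2OpNorm X) * |Cxx X i j t| ≤
      τ ^ (2 * c + 1) * Real.cosh τ / (Nat.factorial (2 * c + 1)) := by
  intro τ c
  set A := l2OpNorm X with hAdef
  set s := Real.sqrt A with hsdef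
  have hA0 : 0 ≤ A := norm_nonneg _
  have hs0 : 0 ≤ s := Real.sqrt_nonneg _
  have hs2 : s ^ 2 = A := Real.sq_sqrt hA0
  have hτ0 : 0 ≤ τ := mul_nonneg hs0 (abs_nonneg t)
  -- entrywise power bound
  have hXn : ∀ n : ℕ, |(X ^ n) i j| ≤ A ^ n := by
    intro n
    cases n with
    | zero =>
      simp only [pow_zero]
      rw [Matrix.one_apply]
      split <;> simp
    | succ n =>
      calc |(X ^ (n + 1)) i j| ≤ l2OpNorm (X ^ (n + 1)) := entry_le_l2OpNorm _ _ _
        _ = ‖(Matrix.toEuclideanCLM (𝕜 := ℝ) X) ^ (n + 1)‖ := by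
            rw [l2OpNorm, map_pow]
        _ ≤ ‖Matrix.toEuclideanCLM (𝕜 := ℝ) X‖ ^ (n + 1) := norm_pow_le' _ (Nat.succ_pos n)
        _ = A ^ (n + 1) := rfl
  -- the summand
  set f : ℕ → ℝ :=
    fun n => s * ((-1 : ℝ) ^ n * t ^ (2 * n + 1) * ((X ^ n) i j) / (Nat.factorial (2 * n + 1)))
    with hfdef
  have hfbound : ∀ n : ℕ, |f n| ≤ τ ^ (2 * n + 1) / (Nat.factorial (2 * n + 1)) := by
    intro n
    have hfac : (0:ℝ) < (Nat.factorial (2 * n + 1) : ℝ) := by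
      exact_mod_cast Nat.factorial_pos _
    have h1 : |f n| = s * (|t| ^ (2 * n + 1) * |(X ^ n) i j| / (Nat.factorial (2 * n + 1))) := by
      rw [hfdef]
      simp only [abs_mul, abs_div, abs_pow, abs_neg, abs_one, one_pow, one_mul,
        abs_of_nonneg hs0, Nat.abs_cast]
    rw [h1]
    have h2 : s * (|t| ^ (2 * n + 1) * |(X ^ n) i j| / (Nat.factorial (2 * n + 1)))
        ≤ s * (|t| ^ (2 * n + 1) * A ^ n / (Nat.factorial (2 * n + 1))) := by
      apply mul_le_mul_of_nonneg_left _ hs0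
      gcongr
      exact hXn n
    refine h2.trans (le_of_eq ?_)
    have h3 : s * (|t| ^ (2 * n + 1) * A ^ n) = τ ^ (2 * n + 1) := by
      have : A ^ n = s ^ (2 * n) := by rw [← hs2, ← pow_mul]
      rw [this, show τ = s * |t| from rfl, mul_pow]
      ring
    rw [← h3]; ring
  have hfzero : ∀ n < c, f n = 0 := by
    intro n hn
    have hR0 : (0:ℝ) < (R:ℝ) := by exact_mod_cast hR
    have h1 : (n : ℝ) < (G.dist i j : ℝ) / R := by
      have h2 : (n : ℤ) < ⌈(G.dist i j : ℝ) / R⌉ := Int.lt_toNat.mp hn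
      exact_mod_cast Int.lt_ceil.mp h2
    have h3 : n * R < G.dist i j := by
      have := (lt_div_iff₀ hR0).mp h1
      exact_mod_cast this
    rw [hfdef]
    simp [pow_loc_zero G hconn R X hXloc n i j h3]
  -- summability
  have hg : Summable (fun n : ℕ => τ ^ (2 * n + 1) / (Nat.factorial (2 * n + 1) : ℝ)) := by
    have hinj : Function.Injective (fun n : ℕ => 2 * n + 1) := by
      intro a b hab; dsimp only at hab; omega
    exact (Real.summable_pow_div_factorial τ).comp_injective hinj
  have hf : Summable f :=
    Summable.of_norm_bounded hg (fun n => by rw [Real.norm_eq_abs]; exact hfbound n)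
  -- rewrite LHS
  have hL : s * |Cxx X i j t| = |∑' n, f n| := by
    rw [hfdef, tsum_mul_left, abs_mul, abs_of_nonneg hs0, Cxx]
  rw [hL]
  -- shift
  have hshift : ∑' n, f n = ∑' m, f (m + c) := by
    have h := Summable.sum_add_tsum_nat_add c hf
    rw [Finset.sum_eq_zero (fun n hn => hfzero n (Finset.mem_range.mp hn)), zero_add] at h
    exact h.symm
  rw [hshift]
  -- final bound
  have hcosh : HasSum (fun m : ℕ => τ ^ (2 * c + 1) / (Nat.factorial (2 * c + 1) : ℝ) *
      (τ ^ (2 * m) / (Nat.factorial (2 * m) : ℝ)))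
      (τ ^ (2 * c + 1) / (Nat.factorial (2 * c + 1) : ℝ) * Real.cosh τ) :=
    (Real.hasSum_cosh τ).mul_left _
  have hmain : ∀ m : ℕ, ‖f (m + c)‖ ≤ τ ^ (2 * c + 1) / (Nat.factorial (2 * c + 1) : ℝ) *
      (τ ^ (2 * m) / (Nat.factorial (2 * m) : ℝ)) := by
    intro m
    rw [Real.norm_eq_abs]
    refine (hfbound (m + c)).trans ?_
    have hfac1 : (0:ℝ) < ((Nat.factorial (2 * c + 1) : ℕ) : ℝ) := by
      exact_mod_cast Nat.factorial_pos _
    have hfac2 : (0:ℝ) < ((Nat.factorial (2 * m) : ℕ) : ℝ) := by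
      exact_mod_cast Nat.factorial_pos _
    have hdvd : (Nat.factorial (2 * c + 1)) * (Nat.factorial (2 * m))
        ≤ Nat.factorial (2 * (m + c) + 1) := by
      have := Nat.factorial_mul_factorial_dvd_factorial_add (2 * c + 1) (2 * m)
      have heq : 2 * c + 1 + 2 * m = 2 * (m + c) + 1 := by ring
      rw [heq] at this
      exact Nat.le_of_dvd (Nat.factorial_pos _) this
    have hpow : τ ^ (2 * (m + c) + 1) = τ ^ (2 * c + 1) * τ ^ (2 * m) := by
      rw [← pow_add]; ring_nf
    rw [hpow, div_mul_div_comm]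
    apply div_le_div_of_nonneg_left
    · positivity
    · positivity
    · exact_mod_cast hdvd
  calc |∑' m, f (m + c)| ≤ τ ^ (2 * c + 1) / (Nat.factorial (2 * c + 1) : ℝ) * Real.cosh τ :=
        tsum_of_norm_bounded hcosh hmain
    _ = τ ^ (2 * c + 1) * Real.cosh τ / (Nat.factorial (2 * c + 1)) := by ring
end

section
/- Assume P is the identity matrix and X_{i,j} = 0 whenever dist(i,j) > R. For all i, j ∈ L and all t ∈ ℝ, both |C^{xp}_{i,j}(t)| and |C^{px}_{i,j}(t)| are bounded above by τ^{2⌈d_{i,j}⌉} · cosh(τ)/(2⌈d_{i,j}⌉)!. -/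
/-- For `P = 𝟙`: `C^{xp}_{i,j}(t) = −∑_{n≥0} (−1)^n t^{2n} (X^n)_{i,j}/(2n)!`,
which equals `i[x̂_i(t), p̂_j]`. -/
noncomputable def Cxp {V : Type*} [Fintype V] [DecidableEq V]
    (X : Matrix V V ℝ) (i j : V) (t : ℝ) : ℝ :=
  -∑' n : ℕ, (-1 : ℝ) ^ n * t ^ (2 * n) * ((X ^ n) i j) / (Nat.factorial (2 * n))

/-- For `P = 𝟙`: `C^{px}_{i,j}(t) = ∑_{n≥0} (−1)^n t^{2n} (X^n)_{i,j}/(2n)!`,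
which equals `i[p̂_i(t), x̂_j]`. -/
noncomputable def Cpx {V : Type*} [Fintype V] [DecidableEq V]
    (X : Matrix V V ℝ) (i j : V) (t : ℝ) : ℝ :=
  ∑' n : ℕ, (-1 : ℝ) ^ n * t ^ (2 * n) * ((X ^ n) i j) / (Nat.factorial (2 * n))

section Aux

variable {V : Type*} [Fintype V] [DecidableEq V]

lemma euclidean_abs_apply_le (v : EuclideanSpace ℝ V) (i : V) : |v i| ≤ ‖v‖ := by
  rw [EuclideanSpace.norm_eq]
  have h1 : |v i| = Real.sqrt (‖v i‖ ^ 2) := by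
    rw [Real.sqrt_sq_eq_abs, Real.norm_eq_abs, abs_abs]
  rw [h1]
  apply Real.sqrt_le_sqrt
  exact Finset.single_le_sum (f := fun k => ‖v k‖ ^ 2) (fun k _ => by positivity)
    (Finset.mem_univ i)

lemma abs_entry_le_l2OpNorm (M : Matrix V V ℝ) (i j : V) : |M i j| ≤ l2OpNorm M := by
  set T := Matrix.toEuclideanCLM (𝕜 := ℝ) M with hT
  set e : EuclideanSpace ℝ V := EuclideanSpace.single j (1 : ℝ) with he
  have h1 : (T e) i = M i j := by
    have h2 := Matrix.ofLp_toEuclideanCLM (𝕜 := ℝ) (A := M) (x := e)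
    have h3 : (T e) i = M.mulVec (Pi.single j 1) i := by
      have h4 := congrFun h2 i
      exact h4
    rw [h3]; simp [Matrix.mulVec_single]
  calc |M i j| = |(T e) i| := by rw [h1]
    _ ≤ ‖T e‖ := euclidean_abs_apply_le (T e) i
    _ ≤ ‖T‖ * ‖e‖ := T.le_opNorm e
    _ = l2OpNorm M := by rw [he, EuclideanSpace.norm_single, norm_one, mul_one, hT]; rfl

lemma abs_pow_entry_le (M : Matrix V V ℝ) (n : ℕ) (i j : V) :
    |(M ^ n) i j| ≤ (l2OpNorm M) ^ n := by
  refine (abs_entry_le_l2OpNorm _ i j).trans ?_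
  unfold l2OpNorm
  rw [map_pow]
  rcases Nat.eq_zero_or_pos n with h | h
  · subst h
    rw [pow_zero, pow_zero]
    show ‖(1 : EuclideanSpace ℝ V →L[ℝ] EuclideanSpace ℝ V)‖ ≤ 1
    rw [ContinuousLinearMap.one_def]
    exact ContinuousLinearMap.norm_id_le
  · exact norm_pow_le' _ h

lemma pow_entry_eq_zero_of_far {G : SimpleGraph V} (hconn : G.Connected) {R : ℕ}
    {X : Matrix V V ℝ} (hXloc : ∀ i j : V, R < G.dist i j → X i j = 0) :
    ∀ (n : ℕ) (i j : V), R * n < G.dist i j → (X ^ n) i j = 0 := by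
  intro n
  induction n with
  | zero =>
    intro i j h
    have hij : i ≠ j := by
      rintro rfl
      simp [SimpleGraph.dist_self] at h
    simp [Matrix.one_apply_ne hij]
  | succ n ih =>
    intro i j h
    rw [pow_succ', Matrix.mul_apply]
    apply Finset.sum_eq_zero
    intro k _
    by_cases hk : R < G.dist i k
    · rw [hXloc i k hk, zero_mul]
    · push_neg at hk
      have htri := hconn.dist_triangle (u := i) (v := k) (w := j)
      rw [Nat.mul_succ] at h
      have hkj : R * n < G.dist k j := by
        set m := R * n with hm
        omega
      rw [ih k j hkj, mul_zero]

lemma summable_even_series (x : ℝ) (hx : 0 ≤ x) :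
    Summable (fun n : ℕ => x ^ (2 * n) / (Nat.factorial (2 * n)) : ℕ → ℝ) := by
  refine Summable.of_nonneg_of_le (fun n => by positivity) (fun n => ?_)
    (Real.summable_pow_div_factorial (x ^ 2))
  rw [pow_mul]
  exact div_le_div_of_nonneg_left (by positivity) (by positivity)
    (by exact_mod_cast Nat.factorial_le (by omega))

lemma even_tsum_le_cosh (x : ℝ) (hx : 0 ≤ x) :
    (∑' n : ℕ, x ^ (2 * n) / (Nat.factorial (2 * n)) : ℝ) ≤ Real.cosh x := by
  have hexp : ∀ y : ℝ, Real.exp y = ∑' n : ℕ, y ^ n / (Nat.factorial n) := by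
    intro y
    rw [Real.exp_eq_exp_ℝ, NormedSpace.exp_eq_tsum_div]
  have hs1 := Real.summable_pow_div_factorial x
  have hs2 := Real.summable_pow_div_factorial (-x)
  set g : ℕ → ℝ := fun n => (x ^ n / (Nat.factorial n) + (-x) ^ n / (Nat.factorial n)) / 2
    with hg
  have hgnonneg : ∀ n, 0 ≤ g n := by
    intro n
    have habs : |(-x) ^ n| = x ^ n := by rw [abs_pow, abs_neg, abs_of_nonneg hx]
    have h0 : -(x ^ n) ≤ (-x) ^ n := by
      have := neg_abs_le ((-x) ^ n); rw [habs] at this; exact this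
    have h1 : (0:ℝ) ≤ x ^ n + (-x) ^ n := by linarith
    rw [hg]
    simp only [← add_div]
    positivity
  have hsg : Summable g := (hs1.add hs2).div_const 2
  have hmain : (∑' n : ℕ, x ^ (2 * n) / (Nat.factorial (2 * n)) : ℝ) ≤ ∑' n, g n := by
    refine (summable_even_series x hx).tsum_le_tsum_of_inj (fun m => 2 * m)
      (mul_right_injective₀ two_ne_zero) (fun c _ => hgnonneg c) (fun m => ?_)
      hsg
    have hev : (-x) ^ (2 * m) = x ^ (2 * m) := (even_two_mul m).neg_pow x
    rw [hg]
    simp only [hev]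
    rw [← add_div, ← two_mul, mul_div_assoc, mul_div_cancel_left₀ _ (two_ne_zero)]
  refine hmain.trans ?_
  have : (∑' n, g n) = Real.cosh x := by
    rw [hg]
    rw [tsum_div_const, Summable.tsum_add hs1 hs2, ← hexp, ← hexp, Real.cosh_eq]
  rw [this]

end Aux

set_option maxHeartbeats 1000000 in
/-- **Lieb-Robinson bound for local couplings and `P = 𝟙`**, `xp` and `px` commutators:
both `|C^{xp}_{i,j}(t)|` and `|C^{px}_{i,j}(t)|` are bounded by
`τ^{2⌈d⌉} · cosh τ / (2⌈d⌉)!` with `d = dist(i,j)/R` and `τ = √‖X‖·|t|`. -/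
theorem lieb_robinson_local_P_one_xp_px {V : Type*} [Fintype V] [DecidableEq V]
    (G : SimpleGraph V) (hconn : G.Connected) (R : ℕ) (hR : 1 ≤ R)
    (X : Matrix V V ℝ) (hX : X.IsSymm)
    (hXloc : ∀ i j : V, R < G.dist i j → X i j = 0)
    (i j : V) (t : ℝ) :
    let τ : ℝ := Real.sqrt (l2OpNorm X) * |t|
    let c : ℕ := (⌈(G.dist i j : ℝ) / R⌉).toNat
    |Cxp X i j t| ≤ τ ^ (2 * c) * Real.cosh τ / (Nat.factorial (2 * c)) ∧
    |Cpx X i j t| ≤ τ ^ (2 * c) * Real.cosh τ / (Nat.factorial (2 * c)) := by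
  intro τ c
  set K := l2OpNorm X with hKdef
  have hK : 0 ≤ K := norm_nonneg _
  have hτ0 : 0 ≤ τ := by positivity
  have hτ2 : τ ^ 2 = K * t ^ 2 := by
    show (Real.sqrt K * |t|) ^ 2 = K * t ^ 2
    rw [mul_pow, Real.sq_sqrt hK, sq_abs]
  have htau2n : ∀ n : ℕ, τ ^ (2 * n) = K ^ n * t ^ (2 * n) := by
    intro n
    rw [pow_mul, hτ2, mul_pow, ← pow_mul]
  set a : ℕ → ℝ := fun n => (-1 : ℝ) ^ n * t ^ (2 * n) * ((X ^ n) i j) /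
    (Nat.factorial (2 * n)) with ha
  have ht2 : ∀ n : ℕ, (0:ℝ) ≤ t ^ (2 * n) := fun n => by rw [pow_mul]; positivity
  have habs : ∀ n, |a n| = t ^ (2 * n) * |(X ^ n) i j| / (Nat.factorial (2 * n)) := by
    intro n
    rw [ha]
    rw [abs_div, abs_mul, abs_mul, abs_pow, abs_neg, abs_one, one_pow, one_mul,
      abs_of_nonneg (ht2 n), Nat.abs_cast]
  have hbound : ∀ n, |a n| ≤ τ ^ (2 * n) / (Nat.factorial (2 * n)) := by
    intro n
    rw [habs n, htau2n n, mul_comm (K ^ n) (t ^ (2 * n))]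
    gcongr
    · exact ht2 n
    · exact abs_pow_entry_le X n i j
  have hSeven := summable_even_series τ hτ0
  have hSabs : Summable (fun n => |a n|) :=
    Summable.of_nonneg_of_le (fun n => abs_nonneg _) hbound hSeven
  have hSa : Summable a := hSabs.of_abs
  -- vanishing of the first `c` terms
  have hzero : ∀ n < c, a n = 0 := by
    intro n hn
    have h1 : (n : ℤ) < ⌈(G.dist i j : ℝ) / R⌉ := Int.lt_toNat.mp hn
    have h2 : (n : ℝ) < (G.dist i j : ℝ) / R := Int.lt_ceil.mp (by exact_mod_cast h1)
    have hRpos : (0:ℝ) < R := by exact_mod_cast hR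
    have h3 : (n : ℝ) * R < G.dist i j := (lt_div_iff₀ hRpos).mp h2
    have h4 : R * n < G.dist i j := by
      have h5 : ((R * n : ℕ) : ℝ) < ((G.dist i j : ℕ) : ℝ) := by push_cast; linarith
      exact_mod_cast h5
    rw [ha]
    simp [pow_entry_eq_zero_of_far hconn hXloc n i j h4]
  have hCpx : Cpx X i j t = ∑' n, a n := rfl
  have key : |Cpx X i j t| ≤ τ ^ (2 * c) * Real.cosh τ / (Nat.factorial (2 * c)) := by
    have hnorm : |Cpx X i j t| ≤ ∑' n, |a n| := by
      rw [hCpx]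
      have h6 := norm_tsum_le_tsum_norm (f := a) (by simpa [Real.norm_eq_abs] using hSabs)
      simpa [Real.norm_eq_abs] using h6
    have hsplit := Summable.sum_add_tsum_nat_add (f := fun n => |a n|) c hSabs
    have hfirst : ∑ n ∈ Finset.range c, |a n| = 0 :=
      Finset.sum_eq_zero fun n hn => by rw [hzero n (Finset.mem_range.mp hn), abs_zero]
    have hpt : ∀ m : ℕ, |a (m + c)| ≤
        τ ^ (2*c) / (Nat.factorial (2*c)) * (τ ^ (2*m) / (Nat.factorial (2*m))) := by
      intro m
      have h2 : τ ^ (2*(m+c)) = τ ^ (2*c) * τ ^ (2*m) := by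
        rw [← pow_add]; ring_nf
      have h3 : ((Nat.factorial (2*c)) * (Nat.factorial (2*m)) : ℝ) ≤
          ((Nat.factorial (2*(m+c))) : ℝ) := by
        have hd := Nat.factorial_mul_factorial_dvd_factorial_add (2*c) (2*m)
        have h4 : 2*(m+c) = 2*c + 2*m := by ring
        rw [h4]
        exact_mod_cast Nat.le_of_dvd (Nat.factorial_pos _) hd
      calc |a (m+c)| ≤ τ ^ (2*(m+c)) / (Nat.factorial (2*(m+c))) := hbound (m+c)
        _ ≤ (τ ^ (2*c) * τ ^ (2*m)) /
            (((Nat.factorial (2*c)) : ℝ) * ((Nat.factorial (2*m)) : ℝ)) := by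
            rw [h2]
            exact div_le_div_of_nonneg_left (by positivity) (by positivity) h3
        _ = τ ^ (2*c) / (Nat.factorial (2*c)) * (τ ^ (2*m) / (Nat.factorial (2*m))) :=
            (div_mul_div_comm _ _ _ _).symm
    have htail : (∑' m, |a (m + c)|) ≤
        τ ^ (2*c) / (Nat.factorial (2*c)) * ∑' m : ℕ, τ ^ (2*m) / (Nat.factorial (2*m)) := by
      calc (∑' m, |a (m + c)|)
          ≤ ∑' m : ℕ, τ ^ (2*c) / (Nat.factorial (2*c)) * (τ ^ (2*m) / (Nat.factorial (2*m))) :=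
            Summable.tsum_le_tsum hpt ((summable_nat_add_iff c).mpr hSabs) (hSeven.mul_left _)
        _ = τ ^ (2*c) / (Nat.factorial (2*c)) * ∑' m : ℕ, τ ^ (2*m) / (Nat.factorial (2*m)) :=
            tsum_mul_left
    have hsum : (∑' n, |a n|) ≤ τ ^ (2*c) / (Nat.factorial (2*c)) * Real.cosh τ := by
      rw [← hsplit, hfirst, zero_add]
      exact htail.trans
        (mul_le_mul_of_nonneg_left (even_tsum_le_cosh τ hτ0) (by positivity))
    refine hnorm.trans (hsum.trans (le_of_eq ?_))
    rw [div_mul_eq_mul_div]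
  have hxp : |Cxp X i j t| = |Cpx X i j t| := by
    unfold Cxp Cpx
    rw [abs_neg]
  exact ⟨hxp ▸ key, key⟩
end
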